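/- Let P be an N×N irreducible row-stochastic real matrix and let I − Pᵀ = M − N be a regular splitting (M invertible, M⁻¹ ≥ 0 and N ≥ 0 entrywise). Then the spectral radius of the iteration matrix M⁻¹N equals 1, and λ = 1 is a simple eigenvalue of M⁻¹N (its algebraic multiplicity as a root of the characteristic polynomial of M⁻¹N is one). -/

import Mathlib

open Matrix Polynomial

/-- `P` is irreducible: the directed graph with an edge `i → j` whenever `P i j ≠ 0`
is strongly connected. -/
def MatrixIrreducible {N : ℕ} (P : Matrix (Fin N) (Fin N) ℝ) : Prop :=
  ∀ i j : Fin N, Relation.TransGen (fun a b => P a b ≠ 0) i j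

namespace SpectralRadiusAux

open Finset

variable {N : ℕ}

lemma mulVec_apply {R : Type*} [CommRing R] (A : Matrix (Fin N) (Fin N) R) (x : Fin N → R)
    (j : Fin N) : (A *ᵥ x) j = ∑ i, A j i * x i := rfl

lemma vecMul_apply {R : Type*} [CommRing R] (A : Matrix (Fin N) (Fin N) R) (x : Fin N → R)
    (j : Fin N) : (x ᵥ* A) j = ∑ i, x i * A i j := rfl

/-- scalar form of the kernel equation for `1 - Pᵀ`. -/
lemma kernel_scalar_iff (P : Matrix (Fin N) (Fin N) ℝ) (x : Fin N → ℝ) :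
    (1 - Pᵀ) *ᵥ x = 0 ↔ ∀ j, x j = ∑ i, P i j * x i := by
  have key : ∀ j, ((1 - Pᵀ) *ᵥ x) j = x j - ∑ i, P i j * x i := by
    intro j
    rw [mulVec_apply]
    have h : ∀ i, (1 - Pᵀ) j i * x i
        = (if j = i then x i else 0) - P i j * x i := by
      intro i
      simp only [Matrix.sub_apply, Matrix.transpose_apply, Matrix.one_apply, sub_mul, ite_mul,
        one_mul, zero_mul]
    rw [Finset.sum_congr rfl fun i _ => h i, Finset.sum_sub_distrib,
      Finset.sum_ite_eq Finset.univ j (fun i => x i)]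
    simp
  constructor
  · intro h j
    have h0 := congrFun h j
    rw [key j] at h0
    have h1 : x j - ∑ i, P i j * x i = 0 := h0
    linarith
  · intro h
    funext j
    rw [key j, Pi.zero_apply, ← h j, sub_self]

/-- If `x` satisfies the kernel equation, so does its componentwise absolute value. -/
lemma kernel_abs (P : Matrix (Fin N) (Fin N) ℝ)
    (hnn : ∀ i j, 0 ≤ P i j) (hrow : ∀ i, ∑ j, P i j = 1)
    (x : Fin N → ℝ) (hx : ∀ j, x j = ∑ i, P i j * x i) :
    ∀ j, |x j| = ∑ i, P i j * |x i| := by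
  have hle : ∀ j, |x j| ≤ ∑ i, P i j * |x i| := by
    intro j
    calc |x j| = |∑ i, P i j * x i| := by rw [← hx j]
      _ ≤ ∑ i, |P i j * x i| := Finset.abs_sum_le_sum_abs _ _
      _ = ∑ i, P i j * |x i| := by
          refine Finset.sum_congr rfl fun i _ => ?_
          rw [abs_mul, abs_of_nonneg (hnn i j)]
  have hsum : ∑ j, (∑ i, P i j * |x i|) = ∑ j, |x j| := by
    rw [Finset.sum_comm]
    refine Finset.sum_congr rfl fun i _ => ?_
    rw [← Finset.sum_mul, hrow i, one_mul]
  have h0 : ∑ j, ((∑ i, P i j * |x i|) - |x j|) = 0 := by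
    rw [Finset.sum_sub_distrib, hsum, sub_self]
  have hall := (Finset.sum_eq_zero_iff_of_nonneg
    (fun j _ => sub_nonneg.mpr (hle j))).mp h0
  intro j
  have := hall j (Finset.mem_univ j)
  linarith

/-- A nonnegative nonzero solution of the kernel equation is strictly positive,
by irreducibility. -/
lemma kernel_pos (P : Matrix (Fin N) (Fin N) ℝ)
    (hnn : ∀ i j, 0 ≤ P i j) (hirr : MatrixIrreducible P)
    (y : Fin N → ℝ) (hy0 : ∀ i, 0 ≤ y i) (hy : ∀ j, y j = ∑ i, P i j * y i)
    (hne : y ≠ 0) : ∀ j, 0 < y j := by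
  have hstep : ∀ j, y j = 0 → ∀ i, P i j ≠ 0 → y i = 0 := by
    intro j hj i hPij
    have h0 : ∑ i, P i j * y i = 0 := by rw [← hy j, hj]
    have := (Finset.sum_eq_zero_iff_of_nonneg
      (fun i _ => mul_nonneg (hnn i j) (hy0 i))).mp h0 i (Finset.mem_univ i)
    rcases mul_eq_zero.mp this with h | h
    · exact absurd h hPij
    · exact h
  have htg : ∀ i j, Relation.TransGen (fun a b => P a b ≠ 0) i j → y j = 0 → y i = 0 := by
    intro i j h
    induction h with
    | single h => intro h0; exact hstep _ h0 _ h
    | tail _ h ih => intro h0; exact ih (hstep _ h0 _ h)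
  obtain ⟨i0, hi0⟩ : ∃ i, y i ≠ 0 := by
    by_contra h
    push_neg at h
    exact hne (funext h)
  intro j
  rcases lt_or_eq_of_le (hy0 j) with h | h
  · exact h
  · exact absurd (htg i0 j (hirr i0 j) h.symm) hi0

/-- The kernel of `1 - Pᵀ` is spanned by a strictly positive vector. -/
theorem kernel_structure (hN : 1 ≤ N) (P : Matrix (Fin N) (Fin N) ℝ)
    (hnn : ∀ i j, 0 ≤ P i j) (hrow : ∀ i, ∑ j, P i j = 1) (hirr : MatrixIrreducible P) :
    ∃ π : Fin N → ℝ, (∀ i, 0 < π i) ∧ ((1 - Pᵀ) *ᵥ π = 0) ∧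
      ∀ x : Fin N → ℝ, (1 - Pᵀ) *ᵥ x = 0 → ∃ c : ℝ, x = c • π := by
  haveI : NeZero N := ⟨by omega⟩
  -- the all-ones vector is in the kernel of `1 - P`
  have hones : (1 - P) *ᵥ (fun _ => (1 : ℝ)) = 0 := by
    funext j
    rw [mulVec_apply]
    have h : ∀ i, (1 - P) j i * (1 : ℝ) = (if j = i then (1:ℝ) else 0) - P j i := by
      intro i
      simp [Matrix.sub_apply, Matrix.one_apply]
    rw [Finset.sum_congr rfl fun i _ => h i, Finset.sum_sub_distrib,
      Finset.sum_ite_eq Finset.univ j (fun _ => (1:ℝ))]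
    simp [hrow j]
  have hones_ne : (fun _ => (1 : ℝ)) ≠ (0 : Fin N → ℝ) := by
    intro h
    have := congrFun h 0
    norm_num at this
  have hdet1 : (1 - P).det = 0 :=
    Matrix.exists_mulVec_eq_zero_iff.mp ⟨_, hones_ne, hones⟩
  have hdet : (1 - Pᵀ).det = 0 := by
    have h : (1 - Pᵀ) = (1 - P)ᵀ := by
      rw [Matrix.transpose_sub, Matrix.transpose_one]
    rw [h, Matrix.det_transpose]
    exact hdet1
  obtain ⟨π₀, hπ₀ne, hπ₀⟩ := Matrix.exists_mulVec_eq_zero_iff.mpr hdet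
  have hπ₀' := (kernel_scalar_iff P π₀).mp hπ₀
  set π : Fin N → ℝ := fun i => |π₀ i| with hπdef
  have hπker : ∀ j, π j = ∑ i, P i j * π i := kernel_abs P hnn hrow π₀ hπ₀'
  have hπne : π ≠ 0 := by
    intro h
    apply hπ₀ne
    funext i
    have := congrFun h i
    simpa [hπdef, abs_eq_zero] using this
  have hπpos : ∀ i, 0 < π i :=
    kernel_pos P hnn hirr π (fun i => abs_nonneg _) hπker hπne
  refine ⟨π, hπpos, (kernel_scalar_iff P π).mpr hπker, ?_⟩
  intro x hx
  have hx' := (kernel_scalar_iff P x).mp hx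
  obtain ⟨i0, -, hmin⟩ := Finset.exists_min_image Finset.univ (fun i => x i / π i)
    ⟨0, Finset.mem_univ 0⟩
  set c := x i0 / π i0 with hc
  refine ⟨c, ?_⟩
  set z : Fin N → ℝ := fun i => x i - c * π i with hzdef
  have hzker : ∀ j, z j = ∑ i, P i j * z i := by
    intro j
    have h : ∑ i, P i j * z i = (∑ i, P i j * x i) - c * ∑ i, P i j * π i := by
      rw [Finset.mul_sum, ← Finset.sum_sub_distrib]
      refine Finset.sum_congr rfl fun i _ => ?_
      simp only [hzdef]
      ring
    rw [h, ← hx' j, ← hπker j]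
  have hz0 : ∀ i, 0 ≤ z i := by
    intro i
    have h1 : c ≤ x i / π i := hmin i (Finset.mem_univ i)
    have h2 : c * π i ≤ x i := (le_div_iff₀ (hπpos i)).mp h1
    simp only [hzdef]
    linarith
  have hzi0 : z i0 = 0 := by
    simp only [hzdef, hc]
    rw [div_mul_cancel₀ _ (ne_of_gt (hπpos i0)), sub_self]
  have hzzero : z = 0 := by
    by_contra hzne
    have := kernel_pos P hnn hirr z hz0 hzker hzne i0
    rw [hzi0] at this
    exact lt_irrefl 0 this
  funext i
  have h3 := congrFun hzzero i
  simp only [hzdef, Pi.zero_apply] at h3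
  have h4 : x i = c * π i := by linarith
  simpa [Pi.smul_apply, smul_eq_mul] using h4

/-- Evaluation of the characteristic polynomial. -/
lemma charpoly_eval {n : Type*} [DecidableEq n] [Fintype n] {R : Type*} [CommRing R]
    (M : Matrix n n R) (r : R) :
    M.charpoly.eval r = (Matrix.scalar n r - M).det := by
  rw [Matrix.charpoly, _root_.eval_det, Matrix.matPolyEquiv_charmatrix]
  rw [Polynomial.eval_sub, Polynomial.eval_X, Polynomial.eval_C]

/-- The characteristic polynomial of `T - 1` is the Taylor shift of that of `T`. -/
lemma charpoly_sub_one {n : Type*} [DecidableEq n] [Fintype n] (T : Matrix n n ℝ) :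
    (T - 1).charpoly = taylor 1 T.charpoly := by
  have h : (charmatrix T).map (taylorAlgHom (1:ℝ)).toRingHom = charmatrix (T - 1) := by
    ext i j
    by_cases hij : i = j
    · subst hij
      simp only [Matrix.map_apply, charmatrix_apply_eq, AlgHom.toRingHom_eq_coe,
        RingHom.coe_coe, taylorAlgHom_apply, map_sub, taylor_X, taylor_C,
        Matrix.sub_apply, Matrix.one_apply_eq, C_sub, C_1]
      ring_nf
    · simp only [Matrix.map_apply, charmatrix_apply_ne _ _ _ hij, AlgHom.toRingHom_eq_coe,
        RingHom.coe_coe, taylorAlgHom_apply, map_neg, taylor_C,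
        Matrix.sub_apply, Matrix.one_apply_ne hij, sub_zero]
  have h2 := (taylorAlgHom (1:ℝ)).toRingHom.map_det (charmatrix T)
  rw [RingHom.mapMatrix_apply] at h2
  rw [h] at h2
  rw [Matrix.charpoly, Matrix.charpoly, ← h2]
  rfl

/-- Root multiplicity at `0` of the Taylor shift equals the root multiplicity at `1`. -/
lemma rootMultiplicity_taylor (p : ℝ[X]) :
    rootMultiplicity 0 (taylor 1 p) = rootMultiplicity 1 p := by
  by_cases hp : p = 0
  · simp [hp]
  have htaylor_inv : taylor (-1 : ℝ) (taylor 1 p) = p := by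
    rw [taylor_taylor, neg_add_cancel, taylor_zero]
  have htp : taylor (1 : ℝ) p ≠ 0 := by
    intro h
    rw [h, map_zero] at htaylor_inv
    exact hp htaylor_inv.symm
  have hXtaylor : taylor (-1 : ℝ) X = X - C 1 := by
    rw [taylor_X, sub_eq_add_neg, ← C_neg]
  have hXtaylor1 : taylor (1 : ℝ) (X - C 1) = X := by
    rw [map_sub, taylor_X, taylor_C, add_sub_cancel_right]
  apply le_antisymm
  · set m := rootMultiplicity 0 (taylor 1 p) with hm
    have hd : X ^ m ∣ taylor 1 p := by
      have := pow_rootMultiplicity_dvd (taylor 1 p) 0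
      simpa using this
    obtain ⟨q, hq⟩ := hd
    have hp' : p = (X - C 1) ^ m * taylor (-1) q := by
      have h5 := congrArg (taylor (-1 : ℝ)) hq
      rw [htaylor_inv] at h5
      rw [h5]
      rw [show (taylor (-1 : ℝ)) (X ^ m * q) = (taylorAlgHom (-1:ℝ)) (X ^ m * q) from rfl,
        _root_.map_mul, _root_.map_pow]
      rw [show (taylorAlgHom (-1:ℝ)) X = taylor (-1 : ℝ) X from rfl, hXtaylor]
      rfl
    exact (le_rootMultiplicity_iff hp).mpr ⟨_, hp'⟩
  · set m := rootMultiplicity 1 p with hm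
    have hd : (X - C 1) ^ m ∣ p := pow_rootMultiplicity_dvd p 1
    obtain ⟨q, hq⟩ := hd
    have h6 : taylor (1:ℝ) p = X ^ m * taylor 1 q := by
      have h5 := congrArg (taylor (1 : ℝ)) hq
      rw [h5]
      rw [show (taylor (1 : ℝ)) ((X - C 1) ^ m * q) = (taylorAlgHom (1:ℝ)) ((X - C 1) ^ m * q)
        from rfl, _root_.map_mul, _root_.map_pow]
      rw [show (taylorAlgHom (1:ℝ)) (X - C 1) = taylor (1 : ℝ) (X - C 1) from rfl, hXtaylor1]
      rfl
    have h7 : (X - C (0:ℝ)) ^ m ∣ taylor 1 p := by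
      rw [map_zero, sub_zero, h6]
      exact ⟨_, rfl⟩
    exact (le_rootMultiplicity_iff htp).mpr h7

lemma charpoly_toLin' {n : ℕ} (B : Matrix (Fin n) (Fin n) ℝ) :
    (Matrix.toLin' B).charpoly = B.charpoly := by
  rw [← LinearMap.charpoly_toMatrix (Matrix.toLin' B) (Pi.basisFun ℝ (Fin n)),
    LinearMap.toMatrix_eq_toMatrix', LinearMap.toMatrix'_toLin']

end SpectralRadiusAux

open SpectralRadiusAux

theorem spectral_radius_one_and_simple
    {N : ℕ} (hN : 1 ≤ N) (P M Nmat : Matrix (Fin N) (Fin N) ℝ)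
    (hnn : ∀ i j, 0 ≤ P i j)
    (hrow : ∀ i, ∑ j, P i j = 1)
    (hirr : MatrixIrreducible P)
    (hsplit : (1 : Matrix (Fin N) (Fin N) ℝ) - Pᵀ = M - Nmat)
    (hM : IsUnit M.det)
    (hMinv_nn : ∀ i j, 0 ≤ M⁻¹ i j)
    (hN_nn : ∀ i j, 0 ≤ Nmat i j) :
    -- the spectral radius of the iteration matrix `M⁻¹ * Nmat` equals 1:
    -- every complex eigenvalue has modulus at most 1 and 1 itself is an eigenvalue,
    (∀ z : ℂ, (((M⁻¹ * Nmat).map (Complex.ofReal)).charpoly).IsRoot z → ‖z‖ ≤ 1) ∧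
    (((M⁻¹ * Nmat).map (Complex.ofReal)).charpoly).IsRoot 1 ∧
    -- and 1 is a simple eigenvalue: its algebraic multiplicity is one
    (((M⁻¹ * Nmat).map (Complex.ofReal)).charpoly).rootMultiplicity 1 = 1 := by
  haveI : NeZero N := ⟨by omega⟩
  set A : Matrix (Fin N) (Fin N) ℝ := 1 - Pᵀ with hA
  set T : Matrix (Fin N) (Fin N) ℝ := M⁻¹ * Nmat with hT
  -- basic nonnegativity of T
  have hTnn : ∀ i j, 0 ≤ T i j := by
    intro i j
    rw [hT, Matrix.mul_apply]
    exact Finset.sum_nonneg fun k _ => mul_nonneg (hMinv_nn i k) (hN_nn k j)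
  -- the all-ones row vector
  set onev : Fin N → ℝ := fun _ => (1 : ℝ) with honev
  have honev_ne : onev ≠ 0 := by
    intro h
    have := congrFun h 0
    norm_num [honev] at this
  -- 𝟙 ᵥ* A = 0
  have hA1 : onev ᵥ* A = 0 := by
    funext j
    rw [SpectralRadiusAux.vecMul_apply]
    have h : ∀ i, onev i * A i j = (if i = j then (1:ℝ) else 0) - P j i := by
      intro i
      simp [hA, honev, Matrix.sub_apply, Matrix.one_apply, Matrix.transpose_apply]
    rw [Finset.sum_congr rfl fun i _ => h i, Finset.sum_sub_distrib,
      Finset.sum_ite_eq' Finset.univ j (fun _ => (1:ℝ))]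
    simp [hrow j]
  set w : Fin N → ℝ := onev ᵥ* Nmat with hw
  have hw_nn : ∀ j, 0 ≤ w j := by
    intro j
    rw [hw, SpectralRadiusAux.vecMul_apply]
    exact Finset.sum_nonneg fun i _ => by
      simpa [honev] using hN_nn i j
  have hwM : onev ᵥ* M = w := by
    have h : onev ᵥ* A = onev ᵥ* (M - Nmat) := by rw [hsplit]
    rw [hA1, Matrix.vecMul_sub] at h
    have h2 := sub_eq_zero.mp h.symm
    rw [hw]
    exact h2
  have hwMinv : w ᵥ* M⁻¹ = onev := by
    rw [← hwM, Matrix.vecMul_vecMul, Matrix.mul_nonsing_inv M hM, Matrix.vecMul_one]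
  have hwT : w ᵥ* T = w := by
    rw [hT, ← Matrix.vecMul_vecMul, hwMinv, hw]
  have hw_ne : w ≠ 0 := by
    intro h
    rw [h, Matrix.zero_vecMul] at hwMinv
    exact honev_ne hwMinv.symm
  -- column of T vanishes where w vanishes
  have hcol : ∀ j, w j = 0 → ∀ k, T k j = 0 := by
    intro j hj k
    have hNcol : ∀ i, Nmat i j = 0 := by
      have h0 : ∑ i, Nmat i j = 0 := by
        rw [hw, SpectralRadiusAux.vecMul_apply] at hj
        simpa [honev] using hj
      intro i
      exact (Finset.sum_eq_zero_iff_of_nonneg (fun i _ => hN_nn i j)).mp h0 i (Finset.mem_univ i)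
    rw [hT, Matrix.mul_apply]
    exact Finset.sum_eq_zero fun l _ => by rw [hNcol l, mul_zero]
  -- kernel structure of A
  obtain ⟨π, hπpos, hπker, hπspan⟩ := kernel_structure hN P hnn hrow hirr
  have hπ_ne : π ≠ 0 := by
    intro h
    have := congrFun h 0
    rw [Pi.zero_apply] at this
    exact absurd this (ne_of_gt (hπpos 0))
  -- 1 - T = M⁻¹ * A
  have h1T : (1 : Matrix (Fin N) (Fin N) ℝ) - T = M⁻¹ * A := by
    rw [hsplit, Matrix.mul_sub, Matrix.nonsing_inv_mul M hM, ← hT]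
  -- det A = 0
  have hdetA : A.det = 0 := by
    have htr : Aᵀ = 1 - P := by
      rw [hA, Matrix.transpose_sub, Matrix.transpose_one, Matrix.transpose_transpose]
    have hones : (1 - P) *ᵥ onev = 0 := by
      funext j
      rw [SpectralRadiusAux.mulVec_apply]
      have h : ∀ i, (1 - P) j i * onev i = (if j = i then (1:ℝ) else 0) - P j i := by
        intro i
        simp [honev, Matrix.sub_apply, Matrix.one_apply]
      rw [Finset.sum_congr rfl fun i _ => h i, Finset.sum_sub_distrib,
        Finset.sum_ite_eq Finset.univ j (fun _ => (1:ℝ))]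
      simp [hrow j]
    have h5 : (1 - P).det = 0 := Matrix.exists_mulVec_eq_zero_iff.mp ⟨_, honev_ne, hones⟩
    rw [← Matrix.det_transpose, htr]
    exact h5
  -- det (1 - T) = 0
  have hdet1T : ((1 : Matrix (Fin N) (Fin N) ℝ) - T).det = 0 := by
    rw [h1T, Matrix.det_mul, hdetA, mul_zero]
  have hscalar_one : Matrix.scalar (Fin N) (1:ℝ) = 1 := by
    rw [Matrix.scalar_apply, Matrix.diagonal_one]
  have hreal_root : T.charpoly.eval 1 = 0 := by
    rw [charpoly_eval, hscalar_one, hdet1T]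
  -- relation between complex and real charpoly
  have hmap : ((T.map Complex.ofReal).charpoly) = T.charpoly.map Complex.ofRealHom :=
    Matrix.charpoly_map T Complex.ofRealHom
  refine ⟨?_, ?_, ?_⟩
  · -- Part 1: all complex roots have modulus ≤ 1
    intro z hz
    set Tc : Matrix (Fin N) (Fin N) ℂ := T.map Complex.ofReal with hTc
    have hdetz : (Matrix.scalar (Fin N) z - Tc).det = 0 := by
      rw [← charpoly_eval Tc z]
      exact hz
    obtain ⟨x, hx_ne, hx⟩ := Matrix.exists_mulVec_eq_zero_iff.mpr hdetz
    have heig : ∀ i, (Tc *ᵥ x) i = z * x i := by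
      intro i
      have h1 := hx
      rw [Matrix.sub_mulVec, sub_eq_zero] at h1
      have h2 : (Matrix.scalar (Fin N) z *ᵥ x) i = z * x i := by
        rw [Matrix.scalar_apply, SpectralRadiusAux.mulVec_apply]
        simp [Matrix.diagonal_apply, ite_mul]
      rw [← h1, h2]
    set u : Fin N → ℝ := fun i => ‖x i‖ with hu
    have hineq : ∀ i, ‖z‖ * u i ≤ (T *ᵥ u) i := by
      intro i
      calc ‖z‖ * u i = ‖z * x i‖ := by rw [norm_mul]
        _ = ‖(Tc *ᵥ x) i‖ := by rw [heig i]
        _ = ‖∑ j, Tc i j * x j‖ := rfl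
        _ ≤ ∑ j, ‖Tc i j * x j‖ := norm_sum_le _ _
        _ = ∑ j, T i j * u j := by
            refine Finset.sum_congr rfl fun j _ => ?_
            rw [norm_mul]
            congr 1
            show ‖((T i j : ℝ) : ℂ)‖ = T i j
            rw [Complex.norm_real, Real.norm_eq_abs]
            exact abs_of_nonneg (hTnn i j)
        _ = (T *ᵥ u) i := rfl
    have h4 : w ⬝ᵥ (T *ᵥ u) = w ⬝ᵥ u := by
      rw [Matrix.dotProduct_mulVec, hwT]
    have hchain : ‖z‖ * (w ⬝ᵥ u) ≤ w ⬝ᵥ u := by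
      calc ‖z‖ * (w ⬝ᵥ u) = ∑ i, w i * (‖z‖ * u i) := by
            rw [dotProduct, Finset.mul_sum]
            refine Finset.sum_congr rfl fun i _ => by ring
        _ ≤ ∑ i, w i * (T *ᵥ u) i := Finset.sum_le_sum fun i _ =>
            mul_le_mul_of_nonneg_left (hineq i) (hw_nn i)
        _ = w ⬝ᵥ (T *ᵥ u) := rfl
        _ = w ⬝ᵥ u := h4
    have hwu_nn : 0 ≤ w ⬝ᵥ u :=
      Finset.sum_nonneg fun i _ => mul_nonneg (hw_nn i) (norm_nonneg _)
    rcases eq_or_lt_of_le hwu_nn with hzero | hpos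
    · -- w ⬝ᵥ u = 0 : then in fact z = 0
      have hterm : ∀ i, w i * u i = 0 := by
        have h6 := (Finset.sum_eq_zero_iff_of_nonneg
          (fun i _ => mul_nonneg (hw_nn i) (norm_nonneg (x i)))).mp hzero.symm
        exact fun i => h6 i (Finset.mem_univ i)
      obtain ⟨i1, hi1⟩ : ∃ i, x i ≠ 0 := by
        by_contra h
        push_neg at h
        exact hx_ne (funext h)
      have hzx : z * x i1 = 0 := by
        rw [← heig i1]
        show ∑ j, Tc i1 j * x j = 0
        refine Finset.sum_eq_zero fun j _ => ?_
        by_cases hxj : x j = 0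
        · rw [hxj, mul_zero]
        · have huj : 0 < u j := by
            simp only [hu]
            exact norm_pos_iff.mpr hxj
          have hwj : w j = 0 := by
            rcases mul_eq_zero.mp (hterm j) with h | h
            · exact h
            · exact absurd h (ne_of_gt huj)
          have hTj := hcol j hwj i1
          show ((T i1 j : ℝ) : ℂ) * x j = 0
          rw [hTj]
          simp
      have hz0 : z = 0 := by
        rcases mul_eq_zero.mp hzx with h | h
        · exact h
        · exact absurd h hi1
      rw [hz0]
      simp
    · exact (mul_le_iff_le_one_left hpos).mp hchain
  · -- Part 2: 1 is a root
    rw [hmap]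
    have h1 : (1 : ℂ) = Complex.ofRealHom (1:ℝ) := by simp
    rw [Polynomial.IsRoot, h1, Polynomial.eval_map, Polynomial.eval₂_at_apply, hreal_root,
      map_zero]
  · -- Part 3: simplicity
    set B : Matrix (Fin N) (Fin N) ℝ := T - 1 with hB
    have hBA : B = -(M⁻¹ * A) := by rw [hB, ← h1T, neg_sub]
    have hAmul : ∀ v : Fin N → ℝ, B *ᵥ v = 0 ↔ A *ᵥ v = 0 := by
      intro v
      rw [hBA]
      constructor
      · intro h
        have h6 : (M⁻¹ * A) *ᵥ v = 0 := by
          have h7 := congrArg Neg.neg h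
          rw [Matrix.neg_mulVec, neg_neg, neg_zero] at h7
          exact h7
        have h8 : M *ᵥ ((M⁻¹ * A) *ᵥ v) = A *ᵥ v := by
          rw [Matrix.mulVec_mulVec, ← Matrix.mul_assoc, Matrix.mul_nonsing_inv M hM,
            Matrix.one_mul]
        rw [← h8, h6, Matrix.mulVec_zero]
      · intro h
        rw [Matrix.neg_mulVec, ← Matrix.mulVec_mulVec, h, Matrix.mulVec_zero, neg_zero]
    have hπB : B *ᵥ π = 0 := (hAmul π).mpr hπker
    have hwdotπ : 0 < w ⬝ᵥ π := by
      obtain ⟨j1, hj1⟩ : ∃ j, w j ≠ 0 := by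
        by_contra h
        push_neg at h
        exact hw_ne (funext h)
      have hj1' : 0 < w j1 := lt_of_le_of_ne (hw_nn j1) (Ne.symm hj1)
      exact Finset.sum_pos' (fun i _ => mul_nonneg (hw_nn i) (le_of_lt (hπpos i)))
        ⟨j1, Finset.mem_univ j1, mul_pos hj1' (hπpos j1)⟩
    have hkey : ∀ x : Fin N → ℝ, B *ᵥ (B *ᵥ x) = 0 → B *ᵥ x = 0 := by
      intro x hx2
      set y := B *ᵥ x with hy
      have hAy : A *ᵥ y = 0 := (hAmul y).mp hx2
      obtain ⟨c, hc⟩ := hπspan y hAy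
      have hwy : w ⬝ᵥ y = 0 := by
        rw [hy, hBA, Matrix.neg_mulVec, dotProduct_neg, Matrix.dotProduct_mulVec]
        have h9 : w ᵥ* (M⁻¹ * A) = 0 := by
          rw [← Matrix.vecMul_vecMul, hwMinv, hA1]
        rw [h9, zero_dotProduct, neg_zero]
      rw [hc, dotProduct_smul, smul_eq_mul] at hwy
      have hc0 : c = 0 := by
        rcases mul_eq_zero.mp hwy with h | h
        · exact h
        · exact absurd h (ne_of_gt hwdotπ)
      show B *ᵥ x = 0
      rw [hy] at hc
      rw [hc, hc0, zero_smul]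
    set φ : Module.End ℝ (Fin N → ℝ) := Matrix.toLin' B with hφ
    have hφ_apply : ∀ v, φ v = B *ᵥ v := fun v => Matrix.toLin'_apply B v
    have hpowker : ∀ (k : ℕ) (v : Fin N → ℝ), (φ ^ k) v = 0 → B *ᵥ v = 0 := by
      intro k
      induction k with
      | zero =>
        intro v hv
        rw [pow_zero, Module.End.one_apply] at hv
        rw [hv, Matrix.mulVec_zero]
      | succ k ih =>
        intro v hv
        rw [pow_succ, Module.End.mul_apply] at hv
        have h8 := ih (φ v) hv
        rw [hφ_apply] at h8
        exact hkey v h8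
    have hspan_eq : Module.End.maxGenEigenspace φ 0 = Submodule.span ℝ {π} := by
      ext v
      rw [Module.End.mem_maxGenEigenspace]
      simp only [zero_smul, sub_zero]
      constructor
      · rintro ⟨k, hk⟩
        have hBv := hpowker k v hk
        have hAv := (hAmul v).mp hBv
        obtain ⟨c, hc⟩ := hπspan v hAv
        rw [Submodule.mem_span_singleton]
        exact ⟨c, hc.symm⟩
      · intro hv
        rw [Submodule.mem_span_singleton] at hv
        obtain ⟨c, hc⟩ := hv
        refine ⟨1, ?_⟩
        rw [pow_one, hφ_apply, ← hc, Matrix.mulVec_smul, hπB, smul_zero]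
    have hfr := LinearMap.finrank_maxGenEigenspace_zero_eq φ
    rw [hspan_eq, finrank_span_singleton hπ_ne] at hfr
    have hφchar : φ.charpoly = B.charpoly := SpectralRadiusAux.charpoly_toLin' B
    rw [hφchar] at hfr
    -- final chain
    have h9 : rootMultiplicity (1:ℂ) (T.charpoly.map Complex.ofRealHom)
        = rootMultiplicity (1:ℝ) T.charpoly := by
      rw [show (1:ℂ) = Complex.ofRealHom (1:ℝ) by simp]
      exact (eq_rootMultiplicity_map Complex.ofReal_injective 1).symm
    rw [hmap, h9, ← rootMultiplicity_taylor, ← charpoly_sub_one, ← hB,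
      rootMultiplicity_eq_natTrailingDegree']
    exact hfr.symm
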